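/- arXiv:1810.09212 — 5 statements merged into one kernel-verified Lean document; each statement's English description precedes it below -/
import Mathlib

section
/- Let ε > 0 and T > 0. Suppose u : ℝ × ℝ² → ℝ is infinitely differentiable, and set w(t,x) = −ε²Δu(t,x) + f(u(t,x)) (Laplacian in the space variable). Assume that ∂ₜu(t,x) = Δw(t,x) for all t ∈ [0,T] and x in the closure of Ω, and that ∂ₙw(t,·) = 0 at every point of the four open edges of ∂Ω for every t ∈ [0,T]. Then the total mass t ↦ ∫_Ω u(t,x) dx is constant on [0,T]. -/
open MeasureTheory Set

/-- Partial derivative in the `x` direction. -/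
noncomputable def pdx (φ : ℝ × ℝ → ℝ) (p : ℝ × ℝ) : ℝ := fderiv ℝ φ p (1, 0)

/-- Partial derivative in the `y` direction. -/
noncomputable def pdy (φ : ℝ × ℝ → ℝ) (p : ℝ × ℝ) : ℝ := fderiv ℝ φ p (0, 1)

/-- Laplacian in the space variables. -/
noncomputable def lap (φ : ℝ × ℝ → ℝ) (p : ℝ × ℝ) : ℝ := pdx (pdx φ) p + pdy (pdy φ) p

/-- The open unit square `Ω = (0,1) × (0,1)`. -/
def unitSq : Set (ℝ × ℝ) := Ioo (0:ℝ) 1 ×ˢ Ioo (0:ℝ) 1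

/-- The double well potential `F(s) = (1/4)(s²-1)²`. -/
noncomputable def F (s : ℝ) : ℝ := (1/4) * (s^2 - 1)^2

/-- `f = F'`, i.e. `f(s) = s³ - s`. -/
noncomputable def fDW (s : ℝ) : ℝ := s^3 - s

/-- Time derivative `∂ₜ u`. -/
noncomputable def dtu (u : ℝ → ℝ × ℝ → ℝ) (t : ℝ) (p : ℝ × ℝ) : ℝ :=
  deriv (fun s => u s p) t

/-- The vanishing of the outward normal derivative of `φ` at every point of the four
open edges of `∂Ω` (on `{0}×(0,1)` and `{1}×(0,1)` it is `∓∂φ/∂x`, on `(0,1)×{0}`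
and `(0,1)×{1}` it is `∓∂φ/∂y`). -/
def ZeroNormalDeriv (φ : ℝ × ℝ → ℝ) : Prop :=
  (∀ y ∈ Ioo (0:ℝ) 1, -pdx φ (0, y) = 0 ∧ pdx φ (1, y) = 0) ∧
  (∀ x ∈ Ioo (0:ℝ) 1, -pdy φ (x, 0) = 0 ∧ pdy φ (x, 1) = 0)

lemma contDiff_pdx {φ : ℝ × ℝ → ℝ} (h : ContDiff ℝ (⊤:ℕ∞) φ) : ContDiff ℝ (⊤:ℕ∞) (pdx φ) :=
  (h.fderiv_right (m := (⊤:ℕ∞)) (by norm_cast)).clm_apply contDiff_const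

lemma contDiff_pdy {φ : ℝ × ℝ → ℝ} (h : ContDiff ℝ (⊤:ℕ∞) φ) : ContDiff ℝ (⊤:ℕ∞) (pdy φ) :=
  (h.fderiv_right (m := (⊤:ℕ∞)) (by norm_cast)).clm_apply contDiff_const

lemma hasDerivAt_slice_x {φ : ℝ × ℝ → ℝ} (h : Differentiable ℝ φ) (x y : ℝ) :
    HasDerivAt (fun s => φ (s, y)) (pdx φ (x, y)) x := by
  have h1 : HasDerivAt (fun s : ℝ => (s, y)) ((1:ℝ), (0:ℝ)) x :=
    (hasDerivAt_id x).prodMk (hasDerivAt_const x y)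
  have h2 := (h (x, y)).hasFDerivAt.comp_hasDerivAt (x := x) h1
  simpa [pdx, Function.comp_def] using h2

lemma hasDerivAt_slice_y {φ : ℝ × ℝ → ℝ} (h : Differentiable ℝ φ) (x y : ℝ) :
    HasDerivAt (fun s => φ (x, s)) (pdy φ (x, y)) y := by
  have h1 : HasDerivAt (fun s : ℝ => (x, s)) ((0:ℝ), (1:ℝ)) y :=
    (hasDerivAt_const y x).prodMk (hasDerivAt_id y)
  have h2 := (h (x, y)).hasFDerivAt.comp_hasDerivAt (x := y) h1
  simpa [pdy, Function.comp_def] using h2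

lemma unitSq_measurable : MeasurableSet unitSq :=
  measurableSet_Ioo.prod measurableSet_Ioo

lemma integrableOn_unitSq {φ : ℝ × ℝ → ℝ} (h : Continuous φ) :
    IntegrableOn φ unitSq := by
  have hK : IsCompact (Icc (0:ℝ) 1 ×ˢ Icc (0:ℝ) 1) := isCompact_Icc.prod isCompact_Icc
  exact (h.continuousOn.integrableOn_compact hK).mono_set
    (prod_mono Ioo_subset_Icc_self Ioo_subset_Icc_self)

/-- The key divergence-theorem computation on the unit square. -/
lemma integral_lap_eq_zero {φ : ℝ × ℝ → ℝ} (h : ContDiff ℝ (⊤:ℕ∞) φ)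
    (hx0 : ∀ y ∈ Ioo (0:ℝ) 1, pdx φ (0, y) = 0)
    (hx1 : ∀ y ∈ Ioo (0:ℝ) 1, pdx φ (1, y) = 0)
    (hy0 : ∀ x ∈ Ioo (0:ℝ) 1, pdy φ (x, 0) = 0)
    (hy1 : ∀ x ∈ Ioo (0:ℝ) 1, pdy φ (x, 1) = 0) :
    ∫ p in unitSq, lap φ p = 0 := by
  have hxx : ContDiff ℝ (⊤:ℕ∞) (pdx (pdx φ)) := contDiff_pdx (contDiff_pdx h)
  have hyy : ContDiff ℝ (⊤:ℕ∞) (pdy (pdy φ)) := contDiff_pdy (contDiff_pdy h)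
  have hixx : IntegrableOn (pdx (pdx φ)) unitSq := integrableOn_unitSq hxx.continuous
  have hiyy : IntegrableOn (pdy (pdy φ)) unitSq := integrableOn_unitSq hyy.continuous
  have hsplit : ∫ p in unitSq, lap φ p
      = (∫ p in unitSq, pdx (pdx φ) p) + ∫ p in unitSq, pdy (pdy φ) p :=
    integral_add hixx hiyy
  -- restrict measure as product of restricted measures
  have hrw : (volume : Measure (ℝ × ℝ)).restrict unitSq
      = ((volume : Measure ℝ).restrict (Ioo 0 1)).prod
          ((volume : Measure ℝ).restrict (Ioo 0 1)) := by
    rw [unitSq, Measure.volume_eq_prod, Measure.prod_restrict]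
  -- the ∂ₓₓ term
  have hxterm : ∫ p in unitSq, pdx (pdx φ) p = 0 := by
    have hiprod : Integrable (pdx (pdx φ))
        (((volume : Measure ℝ).restrict (Ioo 0 1)).prod
          ((volume : Measure ℝ).restrict (Ioo 0 1))) := by
      rw [← hrw]; exact hixx
    calc ∫ p in unitSq, pdx (pdx φ) p
        = ∫ y in Ioo (0:ℝ) 1, ∫ x in Ioo (0:ℝ) 1, pdx (pdx φ) (x, y) := by
          rw [hrw]; exact integral_prod_symm _ hiprod
      _ = ∫ y in Ioo (0:ℝ) 1, (0:ℝ) := by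
          apply setIntegral_congr_fun measurableSet_Ioo
          intro y hy
          show (∫ x in Ioo (0:ℝ) 1, pdx (pdx φ) (x, y)) = 0
          have hcont : Continuous fun x => pdx (pdx φ) (x, y) :=
            hxx.continuous.comp (continuous_id.prodMk continuous_const)
          have key : ∀ x ∈ uIcc (0:ℝ) 1,
              HasDerivAt (fun s => pdx φ (s, y)) (pdx (pdx φ) (x, y)) x :=
            fun x _ => hasDerivAt_slice_x ((contDiff_pdx h).differentiable (by norm_cast)) x y
          have hFTC := intervalIntegral.integral_eq_sub_of_hasDerivAt key
            (hcont.intervalIntegrable 0 1)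
          have : ∫ x in Ioo (0:ℝ) 1, pdx (pdx φ) (x, y)
              = ∫ x in (0:ℝ)..1, pdx (pdx φ) (x, y) := by
            rw [intervalIntegral.integral_of_le zero_le_one, integral_Ioc_eq_integral_Ioo]
          rw [this, hFTC, hx1 y hy, hx0 y hy, sub_zero]
      _ = 0 := by simp
  -- the ∂ᵧᵧ term
  have hyterm : ∫ p in unitSq, pdy (pdy φ) p = 0 := by
    have hiprod : Integrable (pdy (pdy φ))
        (((volume : Measure ℝ).restrict (Ioo 0 1)).prod
          ((volume : Measure ℝ).restrict (Ioo 0 1))) := by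
      rw [← hrw]; exact hiyy
    calc ∫ p in unitSq, pdy (pdy φ) p
        = ∫ x in Ioo (0:ℝ) 1, ∫ y in Ioo (0:ℝ) 1, pdy (pdy φ) (x, y) := by
          rw [hrw]; exact integral_prod _ hiprod
      _ = ∫ x in Ioo (0:ℝ) 1, (0:ℝ) := by
          apply setIntegral_congr_fun measurableSet_Ioo
          intro x hx
          show (∫ y in Ioo (0:ℝ) 1, pdy (pdy φ) (x, y)) = 0
          have hcont : Continuous fun y => pdy (pdy φ) (x, y) :=
            hyy.continuous.comp (continuous_const.prodMk continuous_id)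
          have key : ∀ y ∈ uIcc (0:ℝ) 1,
              HasDerivAt (fun s => pdy φ (x, s)) (pdy (pdy φ) (x, y)) y :=
            fun y _ => hasDerivAt_slice_y ((contDiff_pdy h).differentiable (by norm_cast)) x y
          have hFTC := intervalIntegral.integral_eq_sub_of_hasDerivAt key
            (hcont.intervalIntegrable 0 1)
          have : ∫ y in Ioo (0:ℝ) 1, pdy (pdy φ) (x, y)
              = ∫ y in (0:ℝ)..1, pdy (pdy φ) (x, y) := by
            rw [intervalIntegral.integral_of_le zero_le_one, integral_Ioc_eq_integral_Ioo]
          rw [this, hFTC, hy1 x hx, hy0 x hx, sub_zero]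
      _ = 0 := by simp
  rw [hsplit, hxterm, hyterm, add_zero]

/-- **Mass conservation for the Cahn–Hilliard equation.** If `u` is smooth,
`w = -ε²Δu + f(u)`, `∂ₜu = Δw` on `[0,T] × closure Ω`, and `∂ₙw = 0` on the four open
edges of `∂Ω` for all `t ∈ [0,T]`, then the total mass `∫_Ω u(t,·)` is constant on `[0,T]`. -/
theorem mass_conservation (ε T : ℝ) (hε : 0 < ε) (hT : 0 < T)
    (u : ℝ → ℝ × ℝ → ℝ) (hu : ContDiff ℝ (⊤ : ℕ∞) (Function.uncurry u))
    (w : ℝ → ℝ × ℝ → ℝ)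
    (hw : ∀ t p, w t p = -ε^2 * lap (u t) p + fDW (u t p))
    (heq : ∀ t ∈ Icc (0:ℝ) T, ∀ p ∈ closure unitSq, dtu u t p = lap (w t) p)
    (hbc : ∀ t ∈ Icc (0:ℝ) T, ZeroNormalDeriv (w t)) :
    ∀ t₁ ∈ Icc (0:ℝ) T, ∀ t₂ ∈ Icc (0:ℝ) T,
      ∫ p in unitSq, u t₁ p = ∫ p in unitSq, u t₂ p := by
  -- smoothness of `u t` and `w t`
  have husm : ∀ t, ContDiff ℝ (⊤:ℕ∞) (u t) := fun t =>
    hu.comp (contDiff_const.prodMk contDiff_id)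
  have hwsm : ∀ t, ContDiff ℝ (⊤:ℕ∞) (w t) := by
    intro t
    have hfun : w t = fun p => -ε^2 * lap (u t) p + fDW (u t p) := funext (hw t)
    rw [hfun]
    have hl : ContDiff ℝ (⊤:ℕ∞) (lap (u t)) :=
      (contDiff_pdx (contDiff_pdx (husm t))).add (contDiff_pdy (contDiff_pdy (husm t)))
    have hf : ContDiff ℝ (⊤:ℕ∞) fDW := by
      unfold fDW; exact (contDiff_id.pow 3).sub contDiff_id
    exact (contDiff_const.mul hl).add (hf.comp (husm t))
  -- the time-slice derivative
  set g : ℝ × (ℝ × ℝ) → ℝ :=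
      fun z => fderiv ℝ (Function.uncurry u) z (1, (0 : ℝ × ℝ)) with hg
  have hgc : Continuous g :=
    ((hu.fderiv_right (m := (⊤:ℕ∞)) (by norm_cast)).clm_apply contDiff_const).continuous
  have hslice : ∀ t p, HasDerivAt (fun s => u s p) (g (t, p)) t := by
    intro t p
    have h1 : HasDerivAt (fun s : ℝ => (s, p)) ((1:ℝ), (0 : ℝ × ℝ)) t :=
      (hasDerivAt_id t).prodMk (hasDerivAt_const t p)
    have h2 := ((hu.differentiable (by norm_cast)) (t, p)).hasFDerivAt.comp_hasDerivAt (x := t) h1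
    simpa [hg, Function.uncurry, Function.comp_def] using h2
  have hdtu : ∀ t p, dtu u t p = g (t, p) := fun t p => (hslice t p).deriv
  have hK : IsCompact (Icc (0:ℝ) 1 ×ˢ Icc (0:ℝ) 1) := isCompact_Icc.prod isCompact_Icc
  have hsub : unitSq ⊆ Icc (0:ℝ) 1 ×ˢ Icc (0:ℝ) 1 :=
    prod_mono Ioo_subset_Icc_self Ioo_subset_Icc_self
  have hμfin : volume unitSq < ⊤ :=
    lt_of_le_of_lt (measure_mono hsub) hK.measure_lt_top
  -- the mass has derivative ∫ g(t₀,·)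
  have hM : ∀ t₀ : ℝ, HasDerivAt (fun t => ∫ p in unitSq, u t p)
      (∫ p in unitSq, g (t₀, p)) t₀ := by
    intro t₀
    obtain ⟨C, hC⟩ := ((isCompact_Icc (a := t₀ - 1) (b := t₀ + 1)).prod hK
      ).exists_bound_of_continuousOn hgc.continuousOn
    have hball : ∀ t ∈ Metric.ball t₀ 1, t ∈ Icc (t₀ - 1) (t₀ + 1) := by
      intro t ht
      rw [Metric.mem_ball, Real.dist_eq, abs_lt] at ht
      constructor <;> linarith [ht.1, ht.2]
    refine (hasDerivAt_integral_of_dominated_loc_of_deriv_le (s := Metric.ball t₀ 1)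
      (F := fun t p => u t p) (F' := fun t p => g (t, p))
      (μ := volume.restrict unitSq) (x₀ := t₀) (bound := fun _ => C) (Metric.ball_mem_nhds t₀ one_pos)
      (Filter.Eventually.of_forall fun t => ((husm t).continuous.aestronglyMeasurable).restrict)
      (integrableOn_unitSq (husm t₀).continuous)
      ((hgc.comp (continuous_const.prodMk continuous_id)).aestronglyMeasurable.restrict)
      ?_ ?_ ?_).2
    · apply ae_restrict_of_forall_mem unitSq_measurable
      intro p hp t ht
      exact hC (t, p) ⟨hball t ht, hsub hp⟩
    · exact integrableOn_const hμfin.ne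
    · exact Filter.Eventually.of_forall fun p t _ => hslice t p
  -- the derivative vanishes on [0,T]
  have hzero : ∀ t ∈ Icc (0:ℝ) T,
      HasDerivAt (fun t => ∫ p in unitSq, u t p) 0 t := by
    intro t ht
    have h1 : ∫ p in unitSq, g (t, p) = ∫ p in unitSq, lap (w t) p := by
      apply setIntegral_congr_fun unitSq_measurable
      intro p hp
      show g (t, p) = lap (w t) p
      rw [← hdtu t p]
      exact heq t ht p (subset_closure hp)
    have hb := hbc t ht
    have h2 : ∫ p in unitSq, lap (w t) p = 0 := by
      apply integral_lap_eq_zero (hwsm t)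
      · exact fun y hy => neg_eq_zero.mp (hb.1 y hy).1
      · exact fun y hy => (hb.1 y hy).2
      · exact fun x hx => neg_eq_zero.mp (hb.2 x hx).1
      · exact fun x hx => (hb.2 x hx).2
    have := hM t
    rw [h1, h2] at this
    exact this
  -- constancy
  have hconst : ∀ t ∈ Icc (0:ℝ) T,
      (∫ p in unitSq, u t p) = ∫ p in unitSq, u 0 p := by
    apply constant_of_has_deriv_right_zero
    · exact fun s _ => (hM s).continuousAt.continuousWithinAt
    · exact fun s hs => (hzero s ⟨hs.1, hs.2.le⟩).hasDerivWithinAt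
  intro t₁ h₁ t₂ h₂
  rw [hconst t₁ h₁, hconst t₂ h₂]
end

section
/- Let ε > 0, T > 0 and γ ∈ ℝ. Suppose u : ℝ × ℝ² → ℝ is such that u(t,·) is four times continuously differentiable on a neighborhood of the closure of Ω for each t and ∂ₜu is continuous. Then for every t ∈ [0,T] and every infinitely differentiable v : ℝ² → ℝ, the following integration-by-parts identity holds: ∫_Ω ∂ₜu v dx + ε² a₁(u(t,·), v) + ∫_Ω ∇f(u(t,·)) · ∇v dx = ∫_Ω ( ∂ₜu + ε²Δ²u − Δf(u) ) v dx − ε² ∫_{∂Ω} ∂ₙu Δv ds + γ ε² ∫_{∂Ω} ∂ₙu ∂ₙv ds + ∫_{∂Ω} ∂ₙ( −ε²Δu + f(u) ) v ds. -/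
open MeasureTheory Set

/-- The boundary integral `∫_{∂Ω} g ds`: the sum of the four one-dimensional
arclength integrals over the edges of the unit square. -/
noncomputable def bInt (g : ℝ × ℝ → ℝ) : ℝ :=
  (∫ y in Ioo (0:ℝ) 1, g (0, y)) + (∫ y in Ioo (0:ℝ) 1, g (1, y)) +
  (∫ x in Ioo (0:ℝ) 1, g (x, 0)) + (∫ x in Ioo (0:ℝ) 1, g (x, 1))

/-- The outward normal derivative `∂ₙφ` on `∂Ω` (on `{0}×(0,1)` it is `-∂φ/∂x`,
on `{1}×(0,1)` it is `∂φ/∂x`, on `(0,1)×{0}` it is `-∂φ/∂y`, on `(0,1)×{1}` it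
is `∂φ/∂y`). -/
noncomputable def nder (φ : ℝ × ℝ → ℝ) (p : ℝ × ℝ) : ℝ :=
  if p.1 = 0 then -pdx φ p
  else if p.1 = 1 then pdx φ p
  else if p.2 = 0 then -pdy φ p
  else pdy φ p

/-- The Nitsche bilinear form
`a₁(w,v) = ∫_Ω Δw Δv − ∫_{∂Ω} Δw ∂ₙv − ∫_{∂Ω} ∂ₙw Δv + γ ∫_{∂Ω} ∂ₙw ∂ₙv`. -/
noncomputable def a1 (γ : ℝ) (w v : ℝ × ℝ → ℝ) : ℝ :=
  (∫ p in unitSq, lap w p * lap v p)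
    - bInt (fun p => lap w p * nder v p)
    - bInt (fun p => nder w p * lap v p)
    + γ * bInt (fun p => nder w p * nder v p)



section NitscheAux

lemma closure_unitSq : closure unitSq = Icc ((0:ℝ),(0:ℝ)) ((1:ℝ),(1:ℝ)) := by
  rw [unitSq, closure_prod_eq, closure_Ioo (by norm_num : (0:ℝ) ≠ 1), Icc_prod_Icc]

lemma unitSq_subset_Icc : unitSq ⊆ Icc ((0:ℝ),(0:ℝ)) ((1:ℝ),(1:ℝ)) := by
  rw [← Icc_prod_Icc]; exact prod_mono Ioo_subset_Icc_self Ioo_subset_Icc_self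

lemma unitSq_ae : (unitSq : Set (ℝ × ℝ)) =ᵐ[volume] Icc ((0:ℝ),(0:ℝ)) ((1:ℝ),(1:ℝ)) := by
  rw [← Icc_prod_Icc]
  have hsub : unitSq ⊆ Icc (0:ℝ) 1 ×ˢ Icc (0:ℝ) 1 :=
    prod_mono Ioo_subset_Icc_self Ioo_subset_Icc_self
  have hd : (volume : Measure (ℝ × ℝ)) ((Icc (0:ℝ) 1 ×ˢ Icc (0:ℝ) 1) \ unitSq) = 0 := by
    rw [unitSq, prod_diff_prod]
    refine measure_union_null ?_ ?_
    · have : (volume : Measure (ℝ × ℝ)) (Icc (0:ℝ) 1 ×ˢ (Icc (0:ℝ) 1 \ Ioo 0 1)) =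
        volume (Icc (0:ℝ) 1) * volume (Icc (0:ℝ) 1 \ Ioo (0:ℝ) 1) := by
        rw [show (volume : Measure (ℝ×ℝ)) = (volume : Measure ℝ).prod volume from rfl,
          Measure.prod_prod]
      rw [this, Icc_diff_Ioo_same (by norm_num : (0:ℝ) ≤ 1)]
      simp [Set.Finite.measure_zero (by simp : ({0,1} : Set ℝ).Finite) volume]
    · have : (volume : Measure (ℝ × ℝ)) ((Icc (0:ℝ) 1 \ Ioo 0 1) ×ˢ Icc (0:ℝ) 1) =
        volume (Icc (0:ℝ) 1 \ Ioo (0:ℝ) 1) * volume (Icc (0:ℝ) 1) := by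
        rw [show (volume : Measure (ℝ×ℝ)) = (volume : Measure ℝ).prod volume from rfl,
          Measure.prod_prod]
      rw [this, Icc_diff_Ioo_same (by norm_num : (0:ℝ) ≤ 1)]
      simp [Set.Finite.measure_zero (by simp : ({0,1} : Set ℝ).Finite) volume]
  refine (MeasureTheory.ae_eq_set.2 ⟨?_, hd⟩)
  rw [Set.diff_eq_empty.2 hsub]; simp

lemma pdx_contDiffOn {n : ℕ} {φ : ℝ × ℝ → ℝ} {s : Set (ℝ × ℝ)} (hs : IsOpen s)
    (h : ContDiffOn ℝ (n+1 : ℕ) φ s) : ContDiffOn ℝ (n : ℕ) (pdx φ) s :=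
  (h.fderiv_of_isOpen hs (by norm_cast)).clm_apply contDiffOn_const

lemma pdy_contDiffOn {n : ℕ} {φ : ℝ × ℝ → ℝ} {s : Set (ℝ × ℝ)} (hs : IsOpen s)
    (h : ContDiffOn ℝ (n+1 : ℕ) φ s) : ContDiffOn ℝ (n : ℕ) (pdy φ) s :=
  (h.fderiv_of_isOpen hs (by norm_cast)).clm_apply contDiffOn_const

lemma lap_contDiffOn {n : ℕ} {φ : ℝ × ℝ → ℝ} {s : Set (ℝ × ℝ)} (hs : IsOpen s)
    (h : ContDiffOn ℝ (n+2 : ℕ) φ s) : ContDiffOn ℝ (n : ℕ) (lap φ) s := by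
  have hx := pdx_contDiffOn hs (pdx_contDiffOn (n := n+1) hs (by exact_mod_cast h))
  have hy := pdy_contDiffOn hs (pdy_contDiffOn (n := n+1) hs (by exact_mod_cast h))
  exact hx.add hy

lemma hasFDerivAt_of_contDiffOn {φ : ℝ × ℝ → ℝ} {s : Set (ℝ × ℝ)} (hs : IsOpen s)
    (h : ContDiffOn ℝ (1:ℕ) φ s) {p : ℝ × ℝ} (hp : p ∈ s) :
    HasFDerivAt φ (fderiv ℝ φ p) p :=
  (((h.differentiableOn (by norm_cast)) p hp).differentiableAt (hs.mem_nhds hp)).hasFDerivAt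

lemma green {s : Set (ℝ × ℝ)} (hs : IsOpen s) (hcl : Icc ((0:ℝ),(0:ℝ)) ((1:ℝ),(1:ℝ)) ⊆ s)
    (a b : ℝ × ℝ → ℝ) (ha : ContDiffOn ℝ (2:ℕ) a s) (hb : ContDiffOn ℝ (2:ℕ) b s) :
    (∫ p in unitSq, lap a p * b p) + (∫ p in unitSq, pdx a p * pdx b p + pdy a p * pdy b p)
    = -(∫ y in Ioo (0:ℝ) 1, pdx a (0,y) * b (0,y)) + (∫ y in Ioo (0:ℝ) 1, pdx a (1,y) * b (1,y))
    + -(∫ x in Ioo (0:ℝ) 1, pdy a (x,0) * b (x,0)) + (∫ x in Ioo (0:ℝ) 1, pdy a (x,1) * b (x,1)) := by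
  have ha2 : ContDiffOn ℝ (2:ℕ) a s := ha
  have hb2 : ContDiffOn ℝ (2:ℕ) b s := hb
  have hax : ContDiffOn ℝ (1:ℕ) (pdx a) s := pdx_contDiffOn hs ha2
  have hay : ContDiffOn ℝ (1:ℕ) (pdy a) s := pdy_contDiffOn hs ha2
  have hbx : ContDiffOn ℝ (1:ℕ) (pdx b) s := pdx_contDiffOn hs hb2
  have hby : ContDiffOn ℝ (1:ℕ) (pdy b) s := pdy_contDiffOn hs hb2
  set f : ℝ × ℝ → ℝ := fun p => pdx a p * b p with hf
  set g : ℝ × ℝ → ℝ := fun p => pdy a p * b p with hg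
  set f' : ℝ × ℝ → ℝ × ℝ →L[ℝ] ℝ :=
    fun p => pdx a p • fderiv ℝ b p + b p • fderiv ℝ (pdx a) p with hf'
  set g' : ℝ × ℝ → ℝ × ℝ →L[ℝ] ℝ :=
    fun p => pdy a p • fderiv ℝ b p + b p • fderiv ℝ (pdy a) p with hg'
  have hb1 : ContDiffOn ℝ (1:ℕ) b s := hb2.of_le (by norm_cast)
  have hdf : ∀ p ∈ s, HasFDerivAt f (f' p) p := fun p hp =>
    (hasFDerivAt_of_contDiffOn hs hax hp).mul (hasFDerivAt_of_contDiffOn hs hb1 hp)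
  have hdg : ∀ p ∈ s, HasFDerivAt g (g' p) p := fun p hp =>
    (hasFDerivAt_of_contDiffOn hs hay hp).mul (hasFDerivAt_of_contDiffOn hs hb1 hp)
  have hdiv : ∀ p ∈ s, f' p (1,0) + g' p (0,1)
      = lap a p * b p + (pdx a p * pdx b p + pdy a p * pdy b p) := by
    intro p hp
    simp only [hf', hg', ContinuousLinearMap.add_apply, ContinuousLinearMap.smul_apply,
      smul_eq_mul]
    show pdx a p * pdx b p + b p * pdx (pdx a) p + (pdy a p * pdy b p + b p * pdy (pdy a) p)
      = lap a p * b p + (pdx a p * pdx b p + pdy a p * pdy b p)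
    rw [lap]; ring
  have hcont_div : ContinuousOn (fun p => f' p (1,0) + g' p (0,1)) s := by
    have h1 : ContinuousOn
        (fun p => lap a p * b p + (pdx a p * pdx b p + pdy a p * pdy b p)) s := by
      have hxx : ContinuousOn (pdx (pdx a)) s := (pdx_contDiffOn (n:=0) hs hax).continuousOn
      have hyy : ContinuousOn (pdy (pdy a)) s := (pdy_contDiffOn (n:=0) hs hay).continuousOn
      exact (((hxx.add hyy).mul hb.continuousOn).add
        ((hax.continuousOn.mul hbx.continuousOn).add (hay.continuousOn.mul hby.continuousOn)))
    exact h1.congr (fun p hp => hdiv p hp)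
  have Hi : IntegrableOn (fun p => f' p (1,0) + g' p (0,1)) (Icc ((0:ℝ),(0:ℝ)) ((1:ℝ),(1:ℝ))) :=
    (hcont_div.mono hcl).integrableOn_compact isCompact_Icc
  have hdivthm := integral_divergence_prod_Icc_of_hasFDerivAt_off_countable_of_le
    f g f' g' ((0:ℝ),(0:ℝ)) ((1:ℝ),(1:ℝ)) (by constructor <;> norm_num) ∅ countable_empty
    ((hax.continuousOn.mul hb.continuousOn).mono hcl)
    ((hay.continuousOn.mul hb.continuousOn).mono hcl)
    (fun p hp => hdf p (hcl (unitSq_subset_Icc hp.1)))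
    (fun p hp => hdg p (hcl (unitSq_subset_Icc hp.1)))
    Hi
  have hLHS : (∫ p in unitSq, lap a p * b p)
        + (∫ p in unitSq, pdx a p * pdx b p + pdy a p * pdy b p)
      = ∫ p in Icc ((0:ℝ),(0:ℝ)) ((1:ℝ),(1:ℝ)), f' p (1,0) + g' p (0,1) := by
    have hi1 : IntegrableOn (fun p => lap a p * b p) unitSq := by
      refine IntegrableOn.mono_set ?_ unitSq_subset_Icc
      refine ContinuousOn.integrableOn_compact isCompact_Icc ?_
      refine ContinuousOn.mono ?_ hcl
      exact ((pdx_contDiffOn (n:=0) hs hax).continuousOn.add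
        (pdy_contDiffOn (n:=0) hs hay).continuousOn).mul hb.continuousOn
    have hi2 : IntegrableOn (fun p => pdx a p * pdx b p + pdy a p * pdy b p) unitSq := by
      refine IntegrableOn.mono_set ?_ unitSq_subset_Icc
      refine ContinuousOn.integrableOn_compact isCompact_Icc ?_
      exact ((hax.continuousOn.mul hbx.continuousOn).add
        (hay.continuousOn.mul hby.continuousOn)).mono hcl
    rw [← integral_add hi1 hi2, setIntegral_congr_set unitSq_ae]
    refine setIntegral_congr_fun measurableSet_Icc (fun p hp => ?_)
    exact (hdiv p (hcl hp)).symm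
  rw [hLHS, hdivthm]
  have e1 : ∀ (h : ℝ → ℝ), (∫ x in (0:ℝ)..1, h x) = ∫ x in Ioo (0:ℝ) 1, h x := by
    intro h
    rw [intervalIntegral.integral_of_le (by norm_num : (0:ℝ) ≤ 1), integral_Ioc_eq_integral_Ioo]
  rw [e1, e1, e1, e1]
  show ((∫ x in Ioo (0:ℝ) 1, g (x,1)) - ∫ x in Ioo (0:ℝ) 1, g (x,0))
      + (∫ y in Ioo (0:ℝ) 1, f (1,y)) - (∫ y in Ioo (0:ℝ) 1, f (0,y))
    = -(∫ y in Ioo (0:ℝ) 1, f (0,y)) + (∫ y in Ioo (0:ℝ) 1, f (1,y))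
      + -(∫ x in Ioo (0:ℝ) 1, g (x,0)) + (∫ x in Ioo (0:ℝ) 1, g (x,1))
  ring

lemma bInt_nder_mul (φ ψ : ℝ × ℝ → ℝ) :
    bInt (fun p => nder φ p * ψ p)
    = -(∫ y in Ioo (0:ℝ) 1, pdx φ (0,y) * ψ (0,y)) + (∫ y in Ioo (0:ℝ) 1, pdx φ (1,y) * ψ (1,y))
    + -(∫ x in Ioo (0:ℝ) 1, pdy φ (x,0) * ψ (x,0))
    + (∫ x in Ioo (0:ℝ) 1, pdy φ (x,1) * ψ (x,1)) := by
  rw [bInt]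
  have h1 : (∫ y in Ioo (0:ℝ) 1, nder φ (0,y) * ψ (0,y))
      = ∫ y in Ioo (0:ℝ) 1, -(pdx φ (0,y) * ψ (0,y)) := by
    refine setIntegral_congr_fun measurableSet_Ioo (fun y _ => ?_)
    simp [nder, neg_mul]
  have h2 : (∫ y in Ioo (0:ℝ) 1, nder φ (1,y) * ψ (1,y))
      = ∫ y in Ioo (0:ℝ) 1, pdx φ (1,y) * ψ (1,y) := by
    refine setIntegral_congr_fun measurableSet_Ioo (fun y _ => ?_)
    norm_num [nder]
  have h3 : (∫ x in Ioo (0:ℝ) 1, nder φ (x,0) * ψ (x,0))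
      = ∫ x in Ioo (0:ℝ) 1, -(pdy φ (x,0) * ψ (x,0)) := by
    refine setIntegral_congr_fun measurableSet_Ioo (fun x hx => ?_)
    simp [nder, hx.1.ne', hx.2.ne, neg_mul]
  have h4 : (∫ x in Ioo (0:ℝ) 1, nder φ (x,1) * ψ (x,1))
      = ∫ x in Ioo (0:ℝ) 1, pdy φ (x,1) * ψ (x,1) := by
    refine setIntegral_congr_fun measurableSet_Ioo (fun x hx => ?_)
    norm_num [nder, hx.1.ne', hx.2.ne]
  rw [h1, h2, h3, h4, integral_neg, integral_neg]

lemma bInt_mul_nder (φ ψ : ℝ × ℝ → ℝ) :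
    bInt (fun p => ψ p * nder φ p)
    = -(∫ y in Ioo (0:ℝ) 1, pdx φ (0,y) * ψ (0,y)) + (∫ y in Ioo (0:ℝ) 1, pdx φ (1,y) * ψ (1,y))
    + -(∫ x in Ioo (0:ℝ) 1, pdy φ (x,0) * ψ (x,0))
    + (∫ x in Ioo (0:ℝ) 1, pdy φ (x,1) * ψ (x,1)) := by
  rw [← bInt_nder_mul]
  congr 1; funext p; ring

end NitscheAux

/-- **Integration-by-parts identity for the Nitsche form.** If `u(t,·)` is `C⁴` on a
neighborhood of `closure Ω` for each `t` and `∂ₜu` is continuous, then for every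
`t ∈ [0,T]` and every smooth `v`,
`∫_Ω ∂ₜu v + ε² a₁(u(t,·), v) + ∫_Ω ∇f(u(t,·))·∇v
  = ∫_Ω (∂ₜu + ε²Δ²u − Δf(u)) v − ε² ∫_{∂Ω} ∂ₙu Δv + γε² ∫_{∂Ω} ∂ₙu ∂ₙv
    + ∫_{∂Ω} ∂ₙ(−ε²Δu + f(u)) v`. -/
theorem nitsche_integration_by_parts (ε T γ : ℝ) (hε : 0 < ε) (hT : 0 < T)
    (u : ℝ → ℝ × ℝ → ℝ)
    (hreg : ∀ t : ℝ, ∃ s : Set (ℝ × ℝ),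
      IsOpen s ∧ closure unitSq ⊆ s ∧ ContDiffOn ℝ 4 (u t) s)
    (hcont : Continuous fun q : ℝ × (ℝ × ℝ) => dtu u q.1 q.2) :
    ∀ t ∈ Icc (0:ℝ) T, ∀ v : ℝ × ℝ → ℝ, ContDiff ℝ (⊤ : ℕ∞) v →
      (∫ p in unitSq, dtu u t p * v p) + ε^2 * a1 γ (u t) v +
        (∫ p in unitSq,
          (pdx (fun q => fDW (u t q)) p * pdx v p +
           pdy (fun q => fDW (u t q)) p * pdy v p))
      = (∫ p in unitSq,
          (dtu u t p + ε^2 * lap (lap (u t)) p - lap (fun q => fDW (u t q)) p) * v p)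
        - ε^2 * bInt (fun p => nder (u t) p * lap v p)
        + γ * ε^2 * bInt (fun p => nder (u t) p * nder v p)
        + bInt (fun p => nder (fun q => -ε^2 * lap (u t) q + fDW (u t q)) p * v p) := by
  intro t ht v hv
  obtain ⟨s, hs, hsub, hw⟩ := hreg t
  have hcl : Icc ((0:ℝ),(0:ℝ)) ((1:ℝ),(1:ℝ)) ⊆ s := by rw [← closure_unitSq]; exact hsub
  have hw4 : ContDiffOn ℝ (4:ℕ) (u t) s := by exact_mod_cast hw
  have hv2 : ContDiffOn ℝ (2:ℕ) v s := (hv.of_le (ENat.natCast_le_of_coe_top_le_withTop le_rfl 2)).contDiffOn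
  have hfDW : ContDiff ℝ (2:ℕ) fDW := by
    unfold fDW; exact (contDiff_id.pow 3).sub contDiff_id
  have hP : ContDiffOn ℝ (2:ℕ) (fun q => fDW (u t q)) s :=
    hfDW.comp_contDiffOn (hw4.of_le (by norm_cast))
  have hQ : ContDiffOn ℝ (2:ℕ) (lap (u t)) s := lap_contDiffOn (n:=2) hs hw4
  have G1 := green hs hcl (fun q => fDW (u t q)) v hP hv2
  have G2 := green hs hcl (lap (u t)) v hQ hv2
  have G3 := green hs hcl v (lap (u t)) hv2 hQ
  -- continuity facts
  have cv : Continuous v := hv.continuous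
  have cdtu : Continuous fun p : ℝ × ℝ => dtu u t p := hcont.comp (Continuous.prodMk_right t)
  have intSq : ∀ h : ℝ × ℝ → ℝ, ContinuousOn h s → IntegrableOn h unitSq := fun h hc =>
    ((hc.mono hcl).integrableOn_compact isCompact_Icc).mono_set unitSq_subset_Icc
  have cLapQ : ContinuousOn (lap (lap (u t))) s := (lap_contDiffOn (n:=0) hs hQ).continuousOn
  have cLapP : ContinuousOn (lap (fun q => fDW (u t q))) s :=
    (lap_contDiffOn (n:=0) hs hP).continuousOn
  have cpdxQ : ContinuousOn (pdx (lap (u t))) s := (pdx_contDiffOn (n:=1) hs hQ).continuousOn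
  have cpdyQ : ContinuousOn (pdy (lap (u t))) s := (pdy_contDiffOn (n:=1) hs hQ).continuousOn
  have cpdxP : ContinuousOn (pdx (fun q => fDW (u t q))) s :=
    (pdx_contDiffOn (n:=1) hs hP).continuousOn
  have cpdyP : ContinuousOn (pdy (fun q => fDW (u t q))) s :=
    (pdy_contDiffOn (n:=1) hs hP).continuousOn
  -- interior splitting
  have hsplit : (∫ p in unitSq,
        (dtu u t p + ε^2 * lap (lap (u t)) p - lap (fun q => fDW (u t q)) p) * v p)
      = (∫ p in unitSq, dtu u t p * v p)
        + ε^2 * (∫ p in unitSq, lap (lap (u t)) p * v p)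
        - (∫ p in unitSq, lap (fun q => fDW (u t q)) p * v p) := by
    have i1 : IntegrableOn (fun p => dtu u t p * v p) unitSq :=
      intSq _ ((cdtu.mul cv).continuousOn)
    have i2 : IntegrableOn (fun p => ε^2 * (lap (lap (u t)) p * v p)) unitSq :=
      (intSq _ (cLapQ.mul cv.continuousOn)).const_mul _
    have i3 : IntegrableOn (fun p => -(lap (fun q => fDW (u t q)) p * v p)) unitSq :=
      (intSq _ (cLapP.mul cv.continuousOn)).neg
    have hcong : (∫ p in unitSq,
          (dtu u t p + ε^2 * lap (lap (u t)) p - lap (fun q => fDW (u t q)) p) * v p)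
        = ∫ p in unitSq, (dtu u t p * v p + (ε^2 * (lap (lap (u t)) p * v p)
            + -(lap (fun q => fDW (u t q)) p * v p))) :=
      integral_congr_ae (Filter.Eventually.of_forall (fun p => by ring))
    have i23 : IntegrableOn (fun p => ε^2 * (lap (lap (u t)) p * v p)
        + -(lap (fun q => fDW (u t q)) p * v p)) unitSq := i2.add i3
    rw [hcong, integral_add i1 i23, integral_add i2 i3, integral_neg, integral_const_mul]
    ring
  -- differentiability and derivative of the combination
  have hDQ : ∀ p ∈ s, DifferentiableAt ℝ (lap (u t)) p := fun p hp =>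
    ((hQ.differentiableOn (by norm_cast)) p hp).differentiableAt (hs.mem_nhds hp)
  have hDP : ∀ p ∈ s, DifferentiableAt ℝ (fun q => fDW (u t q)) p := fun p hp =>
    ((hP.differentiableOn (by norm_cast)) p hp).differentiableAt (hs.mem_nhds hp)
  have hfR : ∀ p ∈ s, fderiv ℝ (fun q => -ε^2 * lap (u t) q + fDW (u t q)) p
      = (-ε^2) • fderiv ℝ (lap (u t)) p + fderiv ℝ (fun q => fDW (u t q)) p := by
    intro p hp
    exact (((hDQ p hp).hasFDerivAt.const_mul (-ε^2)).add (hDP p hp).hasFDerivAt).fderiv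
  have hpdxR : ∀ p ∈ s, pdx (fun q => -ε^2 * lap (u t) q + fDW (u t q)) p
      = -ε^2 * pdx (lap (u t)) p + pdx (fun q => fDW (u t q)) p := by
    intro p hp
    show fderiv ℝ (fun q => -ε^2 * lap (u t) q + fDW (u t q)) p (1,0) = _
    rw [hfR p hp]
    simp [pdx, smul_eq_mul]
  have hpdyR : ∀ p ∈ s, pdy (fun q => -ε^2 * lap (u t) q + fDW (u t q)) p
      = -ε^2 * pdy (lap (u t)) p + pdy (fun q => fDW (u t q)) p := by
    intro p hp
    show fderiv ℝ (fun q => -ε^2 * lap (u t) q + fDW (u t q)) p (0,1) = _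
    rw [hfR p hp]
    simp [pdy, smul_eq_mul]
  -- edge integrability helpers
  have edgeV : ∀ h : ℝ × ℝ → ℝ, ContinuousOn h s → ∀ c : ℝ, c ∈ Icc (0:ℝ) 1 →
      IntegrableOn (fun y => h (c, y)) (Ioo (0:ℝ) 1) := by
    intro h hc c hcm
    have hco : ContinuousOn (fun y => h (c, y)) (Icc (0:ℝ) 1) := by
      refine (hc.mono hcl).comp (Continuous.continuousOn (by fun_prop)) ?_
      intro y hy
      rw [← Icc_prod_Icc]; exact mk_mem_prod hcm hy
    exact hco.integrableOn_Icc.mono_set Ioo_subset_Icc_self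
  have edgeH : ∀ h : ℝ × ℝ → ℝ, ContinuousOn h s → ∀ c : ℝ, c ∈ Icc (0:ℝ) 1 →
      IntegrableOn (fun x => h (x, c)) (Ioo (0:ℝ) 1) := by
    intro h hc c hcm
    have hco : ContinuousOn (fun x => h (x, c)) (Icc (0:ℝ) 1) := by
      refine (hc.mono hcl).comp (Continuous.continuousOn (by fun_prop)) ?_
      intro x hx
      rw [← Icc_prod_Icc]; exact mk_mem_prod hx hcm
    exact hco.integrableOn_Icc.mono_set Ioo_subset_Icc_self
  have m0 : (0:ℝ) ∈ Icc (0:ℝ) 1 := ⟨le_rfl, zero_le_one⟩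
  have m1 : (1:ℝ) ∈ Icc (0:ℝ) 1 := ⟨zero_le_one, le_rfl⟩
  have memV : ∀ c ∈ Icc (0:ℝ) 1, ∀ y ∈ Ioo (0:ℝ) 1, ((c, y) : ℝ × ℝ) ∈ s := fun c hc y hy =>
    hcl (by rw [← Icc_prod_Icc]; exact mk_mem_prod hc (Ioo_subset_Icc_self hy))
  have memH : ∀ c ∈ Icc (0:ℝ) 1, ∀ x ∈ Ioo (0:ℝ) 1, ((x, c) : ℝ × ℝ) ∈ s := fun c hc x hx =>
    hcl (by rw [← Icc_prod_Icc]; exact mk_mem_prod (Ioo_subset_Icc_self hx) hc)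
  -- splitting the boundary term for the combination
  have eR0 : (∫ y in Ioo (0:ℝ) 1,
        pdx (fun q => -ε^2 * lap (u t) q + fDW (u t q)) (0,y) * v (0,y))
      = -ε^2 * (∫ y in Ioo (0:ℝ) 1, pdx (lap (u t)) (0,y) * v (0,y))
        + (∫ y in Ioo (0:ℝ) 1, pdx (fun q => fDW (u t q)) (0,y) * v (0,y)) := by
    have hcong : (∫ y in Ioo (0:ℝ) 1,
          pdx (fun q => -ε^2 * lap (u t) q + fDW (u t q)) (0,y) * v (0,y))
        = ∫ y in Ioo (0:ℝ) 1, (-ε^2 * (pdx (lap (u t)) (0,y) * v (0,y))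
            + pdx (fun q => fDW (u t q)) (0,y) * v (0,y)) := by
      refine setIntegral_congr_fun measurableSet_Ioo (fun y hy => ?_)
      rw [hpdxR (0,y) (memV 0 m0 y hy)]; ring
    rw [hcong, integral_add ((edgeV (fun p => pdx (lap (u t)) p * v p) (cpdxQ.mul cv.continuousOn) 0 m0).const_mul _)
      (edgeV (fun p => pdx (fun q => fDW (u t q)) p * v p) (cpdxP.mul cv.continuousOn) 0 m0), integral_const_mul]
  have eR1 : (∫ y in Ioo (0:ℝ) 1,
        pdx (fun q => -ε^2 * lap (u t) q + fDW (u t q)) (1,y) * v (1,y))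
      = -ε^2 * (∫ y in Ioo (0:ℝ) 1, pdx (lap (u t)) (1,y) * v (1,y))
        + (∫ y in Ioo (0:ℝ) 1, pdx (fun q => fDW (u t q)) (1,y) * v (1,y)) := by
    have hcong : (∫ y in Ioo (0:ℝ) 1,
          pdx (fun q => -ε^2 * lap (u t) q + fDW (u t q)) (1,y) * v (1,y))
        = ∫ y in Ioo (0:ℝ) 1, (-ε^2 * (pdx (lap (u t)) (1,y) * v (1,y))
            + pdx (fun q => fDW (u t q)) (1,y) * v (1,y)) := by
      refine setIntegral_congr_fun measurableSet_Ioo (fun y hy => ?_)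
      rw [hpdxR (1,y) (memV 1 m1 y hy)]; ring
    rw [hcong, integral_add ((edgeV (fun p => pdx (lap (u t)) p * v p) (cpdxQ.mul cv.continuousOn) 1 m1).const_mul _)
      (edgeV (fun p => pdx (fun q => fDW (u t q)) p * v p) (cpdxP.mul cv.continuousOn) 1 m1), integral_const_mul]
  have eR2 : (∫ x in Ioo (0:ℝ) 1,
        pdy (fun q => -ε^2 * lap (u t) q + fDW (u t q)) (x,0) * v (x,0))
      = -ε^2 * (∫ x in Ioo (0:ℝ) 1, pdy (lap (u t)) (x,0) * v (x,0))
        + (∫ x in Ioo (0:ℝ) 1, pdy (fun q => fDW (u t q)) (x,0) * v (x,0)) := by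
    have hcong : (∫ x in Ioo (0:ℝ) 1,
          pdy (fun q => -ε^2 * lap (u t) q + fDW (u t q)) (x,0) * v (x,0))
        = ∫ x in Ioo (0:ℝ) 1, (-ε^2 * (pdy (lap (u t)) (x,0) * v (x,0))
            + pdy (fun q => fDW (u t q)) (x,0) * v (x,0)) := by
      refine setIntegral_congr_fun measurableSet_Ioo (fun x hx => ?_)
      rw [hpdyR (x,0) (memH 0 m0 x hx)]; ring
    rw [hcong, integral_add ((edgeH (fun p => pdy (lap (u t)) p * v p) (cpdyQ.mul cv.continuousOn) 0 m0).const_mul _)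
      (edgeH (fun p => pdy (fun q => fDW (u t q)) p * v p) (cpdyP.mul cv.continuousOn) 0 m0), integral_const_mul]
  have eR3 : (∫ x in Ioo (0:ℝ) 1,
        pdy (fun q => -ε^2 * lap (u t) q + fDW (u t q)) (x,1) * v (x,1))
      = -ε^2 * (∫ x in Ioo (0:ℝ) 1, pdy (lap (u t)) (x,1) * v (x,1))
        + (∫ x in Ioo (0:ℝ) 1, pdy (fun q => fDW (u t q)) (x,1) * v (x,1)) := by
    have hcong : (∫ x in Ioo (0:ℝ) 1,
          pdy (fun q => -ε^2 * lap (u t) q + fDW (u t q)) (x,1) * v (x,1))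
        = ∫ x in Ioo (0:ℝ) 1, (-ε^2 * (pdy (lap (u t)) (x,1) * v (x,1))
            + pdy (fun q => fDW (u t q)) (x,1) * v (x,1)) := by
      refine setIntegral_congr_fun measurableSet_Ioo (fun x hx => ?_)
      rw [hpdyR (x,1) (memH 1 m1 x hx)]; ring
    rw [hcong, integral_add ((edgeH (fun p => pdy (lap (u t)) p * v p) (cpdyQ.mul cv.continuousOn) 1 m1).const_mul _)
      (edgeH (fun p => pdy (fun q => fDW (u t q)) p * v p) (cpdyP.mul cv.continuousOn) 1 m1), integral_const_mul]
  -- commutation facts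
  have flip1 : (∫ p in unitSq, lap (u t) p * lap v p)
      = ∫ p in unitSq, lap v p * lap (u t) p :=
    integral_congr_ae (Filter.Eventually.of_forall (fun p => by ring))
  have flip2 : (∫ p in unitSq, pdx (lap (u t)) p * pdx v p + pdy (lap (u t)) p * pdy v p)
      = ∫ p in unitSq, pdx v p * pdx (lap (u t)) p + pdy v p * pdy (lap (u t)) p :=
    integral_congr_ae (Filter.Eventually.of_forall (fun p => by ring))
  simp only [a1]
  rw [bInt_mul_nder v (lap (u t)),
    bInt_nder_mul (fun q => -ε^2 * lap (u t) q + fDW (u t q)) v,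
    hsplit, eR0, eR1, eR2, eR3]
  linear_combination G1 + ε^2 * (flip1 + flip2 + G3 - G2)
end

section
/- Fix h > 0, z ∈ ℝ², and data u₀, …, u₆ ∈ ℝ. Then the evaluation map sending a polynomial p ∈ ℙ₂ to the vector (p(z₀), p(z₁), …, p(z₆)) ∈ ℝ⁷ is injective, and consequently there exists a unique polynomial p ∈ ℙ₂ minimizing the least-squares functional Σ_{j=0}^{6} (p(z_j) − u_j)² over ℙ₂ (i.e., the seven-point patch of a vertex of a regular-pattern uniform mesh satisfies the rank condition). -/
open Finset

/-- `p : ℝ² → ℝ` is a polynomial function of total degree at most 2, i.e. a member of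
the six-dimensional space `ℙ₂`. -/
def IsP2 (p : ℝ × ℝ → ℝ) : Prop :=
  ∃ a b c d e f : ℝ, ∀ q : ℝ × ℝ,
    p q = a + b * q.1 + c * q.2 + d * q.1 ^ 2 + e * q.1 * q.2 + f * q.2 ^ 2

/-- The seven sampling points `z₀, …, z₆` of the first-layer patch of a vertex `z` of a
regular-pattern uniform triangular mesh with mesh size `h`. -/
def pts (h : ℝ) (z : ℝ × ℝ) : Fin 7 → ℝ × ℝ :=
  ![z, z + (h, 0), z + (h, h), z + (0, h), z - (h, 0), z - (h, h), z - (0, h)]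

/-- The least-squares functional `Σ_{j=0}^{6} (p(z_j) − u_j)²`. -/
noncomputable def LS (h : ℝ) (z : ℝ × ℝ) (u : Fin 7 → ℝ) (p : ℝ × ℝ → ℝ) : ℝ :=
  ∑ j : Fin 7, (p (pts h z j) - u j) ^ 2

/-! ### Auxiliary material -/

/-- The quadratic polynomial with coefficient vector `c`. -/
def polyc (c : Fin 6 → ℝ) : ℝ × ℝ → ℝ := fun q =>
  c 0 + c 1 * q.1 + c 2 * q.2 + c 3 * q.1 ^ 2 + c 4 * q.1 * q.2 + c 5 * q.2 ^ 2

lemma isP2_polyc (c : Fin 6 → ℝ) : IsP2 (polyc c) :=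
  ⟨c 0, c 1, c 2, c 3, c 4, c 5, fun _ => rfl⟩

lemma isP2_iff (p : ℝ × ℝ → ℝ) : IsP2 p ↔ ∃ c : Fin 6 → ℝ, ∀ x, p x = polyc c x := by
  constructor
  · rintro ⟨a, b, c, d, e, f, hp⟩
    exact ⟨![a, b, c, d, e, f], fun x => hp x⟩
  · rintro ⟨c, hc⟩
    exact ⟨c 0, c 1, c 2, c 3, c 4, c 5, fun x => hc x⟩

/-- The evaluation map, as a linear map into `ℝ⁷`. -/
def Tmap (h : ℝ) (z : ℝ × ℝ) : (Fin 6 → ℝ) →ₗ[ℝ] EuclideanSpace ℝ (Fin 7) where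
  toFun c := WithLp.toLp 2 (fun j => polyc c (pts h z j))
  map_add' x y := by ext j; simp [polyc]; ring
  map_smul' r x := by ext j; simp [polyc]; ring

lemma normsq (x : EuclideanSpace ℝ (Fin 7)) : ‖x‖ ^ 2 = ∑ j, x j ^ 2 := by
  rw [EuclideanSpace.norm_eq, Real.sq_sqrt (by positivity)]
  simp [sq_abs]

lemma LS_eq_norm (h : ℝ) (z : ℝ × ℝ) (u : Fin 7 → ℝ) (c : Fin 6 → ℝ) :
    LS h z u (polyc c) = ‖Tmap h z c - (WithLp.equiv 2 (Fin 7 → ℝ)).symm u‖ ^ 2 := by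
  rw [normsq]
  refine Finset.sum_congr rfl fun j _ => ?_
  simp [Tmap, LS]

lemma LS_congr (h : ℝ) (z : ℝ × ℝ) (u : Fin 7 → ℝ) {p q : ℝ × ℝ → ℝ}
    (hpq : ∀ x, p x = q x) : LS h z u p = LS h z u q := by
  simp [LS, hpq]

/-- Injectivity of evaluation on the seven-point patch. -/
lemma part1_aux (h : ℝ) (hh : 0 < h) (z : ℝ × ℝ) :
    ∀ p q : ℝ × ℝ → ℝ, IsP2 p → IsP2 q →
      (∀ j : Fin 7, p (pts h z j) = q (pts h z j)) → p = q := by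
  intro p q hp hq heq
  obtain ⟨a, b, c, d, e, f, hp⟩ := hp
  obtain ⟨a', b', c', d', e', f', hq⟩ := hq
  have key : ∀ j : Fin 7,
      a + b * (pts h z j).1 + c * (pts h z j).2 + d * (pts h z j).1 ^ 2
        + e * (pts h z j).1 * (pts h z j).2 + f * (pts h z j).2 ^ 2
      = a' + b' * (pts h z j).1 + c' * (pts h z j).2 + d' * (pts h z j).1 ^ 2
        + e' * (pts h z j).1 * (pts h z j).2 + f' * (pts h z j).2 ^ 2 := by
    intro j; rw [← hp, ← hq]; exact heq j
  have E0 : a + b * z.1 + c * z.2 + d * z.1 ^ 2 + e * z.1 * z.2 + f * z.2 ^ 2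
      = a' + b' * z.1 + c' * z.2 + d' * z.1 ^ 2 + e' * z.1 * z.2 + f' * z.2 ^ 2 := key 0
  have E1 : a + b * (z.1 + h) + c * z.2 + d * (z.1 + h) ^ 2 + e * (z.1 + h) * z.2 + f * z.2 ^ 2
      = a' + b' * (z.1 + h) + c' * z.2 + d' * (z.1 + h) ^ 2 + e' * (z.1 + h) * z.2 + f' * z.2 ^ 2 := by
    simpa [pts, Prod.fst_add, Prod.snd_add, Prod.fst_sub, Prod.snd_sub] using key 1
  have E2 : a + b * (z.1 + h) + c * (z.2 + h) + d * (z.1 + h) ^ 2 + e * (z.1 + h) * (z.2 + h) + f * (z.2 + h) ^ 2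
      = a' + b' * (z.1 + h) + c' * (z.2 + h) + d' * (z.1 + h) ^ 2 + e' * (z.1 + h) * (z.2 + h) + f' * (z.2 + h) ^ 2 := by
    simpa [pts, Prod.fst_add, Prod.snd_add, Prod.fst_sub, Prod.snd_sub] using key 2
  have E3 : a + b * z.1 + c * (z.2 + h) + d * z.1 ^ 2 + e * z.1 * (z.2 + h) + f * (z.2 + h) ^ 2
      = a' + b' * z.1 + c' * (z.2 + h) + d' * z.1 ^ 2 + e' * z.1 * (z.2 + h) + f' * (z.2 + h) ^ 2 := by
    simpa [pts, Prod.fst_add, Prod.snd_add, Prod.fst_sub, Prod.snd_sub] using key 3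
  have E4 : a + b * (z.1 - h) + c * z.2 + d * (z.1 - h) ^ 2 + e * (z.1 - h) * z.2 + f * z.2 ^ 2
      = a' + b' * (z.1 - h) + c' * z.2 + d' * (z.1 - h) ^ 2 + e' * (z.1 - h) * z.2 + f' * z.2 ^ 2 := by
    simpa [pts, Prod.fst_add, Prod.snd_add, Prod.fst_sub, Prod.snd_sub] using key 4
  have E5 : a + b * (z.1 - h) + c * (z.2 - h) + d * (z.1 - h) ^ 2 + e * (z.1 - h) * (z.2 - h) + f * (z.2 - h) ^ 2
      = a' + b' * (z.1 - h) + c' * (z.2 - h) + d' * (z.1 - h) ^ 2 + e' * (z.1 - h) * (z.2 - h) + f' * (z.2 - h) ^ 2 := by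
    simpa [pts, Prod.fst_add, Prod.snd_add, Prod.fst_sub, Prod.snd_sub] using key 5
  have E6 : a + b * z.1 + c * (z.2 - h) + d * z.1 ^ 2 + e * z.1 * (z.2 - h) + f * (z.2 - h) ^ 2
      = a' + b' * z.1 + c' * (z.2 - h) + d' * z.1 ^ 2 + e' * z.1 * (z.2 - h) + f' * (z.2 - h) ^ 2 := by
    simpa [show pts h z 6 = z - (0, h) from rfl, Prod.fst_sub, Prod.snd_sub] using key 6
  have h2 : h ^ 2 ≠ 0 := pow_ne_zero 2 hh.ne'
  have hn : h ≠ 0 := hh.ne'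
  have hd : d = d' := by
    have : d * h ^ 2 = d' * h ^ 2 := by linear_combination (E1 + E4 - 2 * E0) / 2
    exact mul_right_cancel₀ h2 this
  have hf : f = f' := by
    have : f * h ^ 2 = f' * h ^ 2 := by linear_combination (E3 + E6 - 2 * E0) / 2
    exact mul_right_cancel₀ h2 this
  have he : e = e' := by
    have : e * h ^ 2 = e' * h ^ 2 := by
      linear_combination (E2 + E5 - 2 * E0) / 2 - h ^ 2 * hd - h ^ 2 * hf
    exact mul_right_cancel₀ h2 this
  have hb : b = b' := by
    have : b * h = b' * h := by
      linear_combination (E1 - E0) - (2 * z.1 * h + h ^ 2) * hd - (h * z.2) * he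
    exact mul_right_cancel₀ hn this
  have hc : c = c' := by
    have : c * h = c' * h := by
      linear_combination (E3 - E0) - (2 * z.2 * h + h ^ 2) * hf - (z.1 * h) * he
    exact mul_right_cancel₀ hn this
  have ha : a = a' := by
    linear_combination E0 - z.1 * hb - z.2 * hc - z.1 ^ 2 * hd - z.1 * z.2 * he - z.2 ^ 2 * hf
  funext w
  rw [hp, hq]
  linear_combination ha + w.1 * hb + w.2 * hc + w.1 ^ 2 * hd + w.1 * w.2 * he + w.2 ^ 2 * hf

/-- **The seven-point patch satisfies the rank condition.** The evaluation map
`ℙ₂ → ℝ⁷`, `p ↦ (p(z₀), …, p(z₆))`, is injective, and consequently for any data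
`u₀, …, u₆` there is a unique polynomial in `ℙ₂` minimizing the least-squares
functional `Σ_{j=0}^{6} (p(z_j) − u_j)²` over `ℙ₂`. -/
theorem rank_condition_regular_patch (h : ℝ) (hh : 0 < h) (z : ℝ × ℝ) (u : Fin 7 → ℝ) :
    (∀ p q : ℝ × ℝ → ℝ, IsP2 p → IsP2 q →
      (∀ j : Fin 7, p (pts h z j) = q (pts h z j)) → p = q) ∧
    (∃! p : ℝ × ℝ → ℝ, IsP2 p ∧ ∀ q : ℝ × ℝ → ℝ, IsP2 q → LS h z u p ≤ LS h z u q) := by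
  refine ⟨part1_aux h hh z, ?_⟩
  set E := EuclideanSpace ℝ (Fin 7)
  set V := LinearMap.range (Tmap h z) with hV
  set u' : E := (WithLp.equiv 2 (Fin 7 → ℝ)).symm u with hu'
  set v : E := ↑(V.orthogonalProjectionOnto u') with hv
  have hvV : (v : E) ∈ V := (V.orthogonalProjectionOnto u').2
  have horth : u' - v ∈ Vᗮ := Submodule.sub_starProjection_mem_orthogonal (K := V) u'
  have pyth : ∀ w ∈ V, ‖u' - v‖ ^ 2 + ‖v - w‖ ^ 2 = ‖u' - w‖ ^ 2 := by
    intro w hw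
    have hmem : v - w ∈ V := V.sub_mem hvV hw
    have hip : inner ℝ (u' - v) (v - w) = (0 : ℝ) := by
      rw [real_inner_comm]; exact horth _ hmem
    have hsum : u' - w = (u' - v) + (v - w) := by abel
    rw [hsum, norm_add_sq_real, hip]; ring
  obtain ⟨c₀, hc₀⟩ := hvV
  -- the candidate minimizer
  refine ⟨polyc c₀, ⟨isP2_polyc c₀, ?_⟩, ?_⟩
  · -- minimality
    intro q hq
    obtain ⟨cq, hcq⟩ := (isP2_iff q).1 hq
    rw [LS_congr h z u hcq, LS_eq_norm, LS_eq_norm, hc₀]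
    have := pyth (Tmap h z cq) ⟨cq, rfl⟩
    have h1 : ‖(v : E) - u'‖ = ‖u' - v‖ := norm_sub_rev _ _
    have h2 : ‖Tmap h z cq - u'‖ = ‖u' - Tmap h z cq‖ := norm_sub_rev _ _
    rw [h1, h2, ← this]
    nlinarith [sq_nonneg ‖(v : E) - Tmap h z cq‖]
  · -- uniqueness
    intro q ⟨hq, hqmin⟩
    obtain ⟨cq, hcq⟩ := (isP2_iff q).1 hq
    have hle : LS h z u q ≤ LS h z u (polyc c₀) := hqmin _ (isP2_polyc c₀)
    have hkey : ‖u' - Tmap h z cq‖ ^ 2 ≤ ‖u' - v‖ ^ 2 := by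
      have e1 : LS h z u q = ‖u' - Tmap h z cq‖ ^ 2 := by
        rw [LS_congr h z u hcq, LS_eq_norm, norm_sub_rev]
      have e2 : LS h z u (polyc c₀) = ‖u' - v‖ ^ 2 := by
        rw [LS_eq_norm, hc₀, norm_sub_rev]
      rw [← e1, ← e2]; exact hle
    have hpy := pyth (Tmap h z cq) ⟨cq, rfl⟩
    have hz : ‖(v : E) - Tmap h z cq‖ ^ 2 ≤ 0 := by nlinarith
    have hz2 : (v : E) - Tmap h z cq = 0 := by
      have : ‖(v : E) - Tmap h z cq‖ = 0 := by nlinarith [norm_nonneg ((v : E) - Tmap h z cq)]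
      exact norm_eq_zero.1 this
    have hTeq : Tmap h z cq = Tmap h z c₀ := by
      rw [hc₀]; exact (sub_eq_zero.1 hz2).symm
    refine part1_aux h hh z q (polyc c₀) hq (isP2_polyc c₀) fun j => ?_
    have := congrArg (fun x => x j) hTeq
    simpa [Tmap, hcq] using this
end

section
/- Fix h > 0, z ∈ ℝ², and data u₀, …, u₆ ∈ ℝ, and let p ∈ ℙ₂ be any minimizer of the least-squares functional Σ_{j=0}^{6} (p(z_j) − u_j)² over ℙ₂. Then the (constant) second partial derivative of p in the x-direction satisfies ∂²p/∂x² (z) = (u₁ − 2u₀ + u₄) / h². -/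
open Finset

lemma pdx_poly (a b c d e f : ℝ) (φ : ℝ × ℝ → ℝ)
    (hφ : ∀ q : ℝ × ℝ, φ q = a + b * q.1 + c * q.2 + d * q.1 ^ 2 + e * q.1 * q.2 + f * q.2 ^ 2)
    (q : ℝ × ℝ) : pdx φ q = b + 2 * d * q.1 + e * q.2 := by
  have hφ' : φ = fun q : ℝ × ℝ =>
      a + b * q.1 + c * q.2 + d * (q.1 * q.1) + e * (q.1 * q.2) + f * (q.2 * q.2) :=
    funext fun q => by rw [hφ]; ring
  subst hφ'
  have h1 : HasFDerivAt (fun q : ℝ × ℝ => q.1) (ContinuousLinearMap.fst ℝ ℝ ℝ) q := hasFDerivAt_fst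
  have h2 : HasFDerivAt (fun q : ℝ × ℝ => q.2) (ContinuousLinearMap.snd ℝ ℝ ℝ) q := hasFDerivAt_snd
  have H : HasFDerivAt
      (fun q : ℝ × ℝ =>
        a + b * q.1 + c * q.2 + d * (q.1 * q.1) + e * (q.1 * q.2) + f * (q.2 * q.2)) _ q :=
    (((((hasFDerivAt_const a q).add (h1.const_mul b)).add (h2.const_mul c)).add
      ((h1.mul h1).const_mul d)).add ((h1.mul h2).const_mul e)).add ((h2.mul h2).const_mul f)
  rw [pdx, H.fderiv]
  simp
  ring

set_option maxHeartbeats 1600000 in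
/-- For any least-squares fitted quadratic `p` on the seven-point patch, the recovered
second `x`-derivative at `z` is the central difference `(u₁ − 2u₀ + u₄)/h²`. -/
theorem recovered_xx_derivative (h : ℝ) (hh : 0 < h) (z : ℝ × ℝ) (u : Fin 7 → ℝ)
    (p : ℝ × ℝ → ℝ) (hp : IsP2 p)
    (hmin : ∀ q : ℝ × ℝ → ℝ, IsP2 q → LS h z u p ≤ LS h z u q) :
    pdx (pdx p) z = (u 1 - 2 * u 0 + u 4) / h ^ 2 := by
  have hne : h ≠ 0 := ne_of_gt hh
  obtain ⟨a, b, c, d, e, f, hpf⟩ := hp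
  -- the second x-derivative of p is 2*d
  have hxx : pdx (pdx p) z = 2 * d := by
    have h1 : ∀ q : ℝ × ℝ, pdx p q = b + 2 * d * q.1 + e * q.2 := pdx_poly a b c d e f p hpf
    have h2 := pdx_poly b (2 * d) e 0 0 0 (pdx p) (fun q => by rw [h1]; ring) z
    rw [h2]; ring
  -- the test quadratic g
  set g : ℝ × ℝ → ℝ := fun x =>
    -2 + 3 * ((x.1 - z.1) / h) ^ 2 - 3 * ((x.1 - z.1) / h) * ((x.2 - z.2) / h)
      + 2 * ((x.2 - z.2) / h) ^ 2 with hg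
  -- values of g at the seven points
  have e0 : g (pts h z 0) = -2 := by
    show g z = -2
    simp [hg]
  have e1 : g (pts h z 1) = 1 := by
    show g (z + (h, 0)) = 1
    simp [hg, Prod.fst_add, Prod.snd_add]
    field_simp
    norm_num
  have e2 : g (pts h z 2) = 0 := by
    show g (z + (h, h)) = 0
    simp [hg, Prod.fst_add, Prod.snd_add]
    field_simp
    norm_num
  have e3 : g (pts h z 3) = 0 := by
    show g (z + (0, h)) = 0
    simp [hg, Prod.fst_add, Prod.snd_add]
    field_simp
    norm_num
  have e4 : g (pts h z 4) = 1 := by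
    show g (z - (h, 0)) = 1
    simp [hg, Prod.fst_sub, Prod.snd_sub]
    field_simp
    norm_num
  have e5 : g (pts h z 5) = 0 := by
    show g (z - (h, h)) = 0
    simp [hg, Prod.fst_sub, Prod.snd_sub]
    field_simp
    norm_num
  have e6 : g (pts h z 6) = 0 := by
    show g (z - (0, h)) = 0
    simp [hg, Prod.fst_sub, Prod.snd_sub]
    field_simp
    norm_num
  -- the residual combination
  set S : ℝ := (p (pts h z 1) - u 1) + (p (pts h z 4) - u 4) - 2 * (p (pts h z 0) - u 0) with hS
  set t : ℝ := -S / 6 with ht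
  -- the perturbed quadratic is in P2
  have hq2 : IsP2 (fun x => p x + t * g x) := by
    refine ⟨a + t * (-2 + (3 * z.1 ^ 2 - 3 * z.1 * z.2 + 2 * z.2 ^ 2) / h ^ 2),
      b + t * ((-6 * z.1 + 3 * z.2) / h ^ 2),
      c + t * ((3 * z.1 - 4 * z.2) / h ^ 2),
      d + t * (3 / h ^ 2), e + t * (-3 / h ^ 2), f + t * (2 / h ^ 2), fun q => ?_⟩
    show p q + t * g q = _
    rw [hpf]
    simp only [hg]
    field_simp
    ring
  -- expansion of the least-squares functional at the perturbation
  have key : LS h z u (fun x => p x + t * g x) = LS h z u p + 2 * t * S + 6 * t ^ 2 := by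
    simp only [LS, Fin.sum_univ_seven, e0, e1, e2, e3, e4, e5, e6, hS]
    ring
  have hle := hmin (fun x => p x + t * g x) hq2
  rw [key] at hle
  have hS0 : S = 0 := by
    rw [ht] at hle
    nlinarith [sq_nonneg S]
  -- evaluate p at the three relevant points
  have hv : p (pts h z 1) - 2 * p (pts h z 0) + p (pts h z 4) = 2 * d * h ^ 2 := by
    have p0 : p (pts h z 0) = p z := rfl
    have p1 : p (pts h z 1) = p (z + (h, 0)) := rfl
    have p4 : p (pts h z 4) = p (z - (h, 0)) := rfl
    rw [p0, p1, p4, hpf, hpf, hpf]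
    simp [Prod.fst_add, Prod.snd_add, Prod.fst_sub, Prod.snd_sub]
    ring
  rw [hxx]
  have h2 : (0:ℝ) < h ^ 2 := by positivity
  field_simp
  nlinarith [hS0, hv]
end

section
/- Fix h > 0, z ∈ ℝ², and data u₀, …, u₆ ∈ ℝ, and let p ∈ ℙ₂ be any minimizer of the least-squares functional Σ_{j=0}^{6} (p(z_j) − u_j)² over ℙ₂. Then the (constant) mixed second partial derivative of p satisfies ∂²p/∂x∂y (z) = (2u₀ − u₁ + u₂ − u₃ − u₄ + u₅ − u₆) / (2h²). -/
open Finset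

lemma quad_fderiv_x (a b c d e f : ℝ) (q : ℝ × ℝ) :
    fderiv ℝ (fun q : ℝ × ℝ => a + b * q.1 + c * q.2 + d * q.1 ^ 2 + e * q.1 * q.2 + f * q.2 ^ 2) q (1,0)
    = b + 2 * d * q.1 + e * q.2 := by
  have h1 : HasFDerivAt (fun q : ℝ × ℝ => q.1) (ContinuousLinearMap.fst ℝ ℝ ℝ) q := hasFDerivAt_fst
  have h2 : HasFDerivAt (fun q : ℝ × ℝ => q.2) (ContinuousLinearMap.snd ℝ ℝ ℝ) q := hasFDerivAt_snd
  simp only [pow_two]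
  have H := (((((hasFDerivAt_const a q).add (h1.const_mul b)).add (h2.const_mul c)).add
      ((h1.mul h1).const_mul d)).add ((h1.const_mul e).mul h2)).add ((h2.mul h2).const_mul f)
  rw [HasFDerivAt.fderiv (f := fun q : ℝ × ℝ => a + b * q.1 + c * q.2 + d * (q.1 * q.1) + e * q.1 * q.2 + f * (q.2 * q.2)) H]
  simp [ContinuousLinearMap.add_apply, ContinuousLinearMap.smul_apply]
  ring

lemma lin_fderiv_y (b d e : ℝ) (z : ℝ × ℝ) :
    fderiv ℝ (fun q : ℝ × ℝ => b + 2 * d * q.1 + e * q.2) z (0,1) = e := by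
  have h1 : HasFDerivAt (fun q : ℝ × ℝ => q.1) (ContinuousLinearMap.fst ℝ ℝ ℝ) z := hasFDerivAt_fst
  have h2 : HasFDerivAt (fun q : ℝ × ℝ => q.2) (ContinuousLinearMap.snd ℝ ℝ ℝ) z := hasFDerivAt_snd
  have H := (((hasFDerivAt_const b z).add (h1.const_mul (2 * d))).add (h2.const_mul e))
  rw [HasFDerivAt.fderiv (f := fun q : ℝ × ℝ => b + 2 * d * q.1 + e * q.2) H]
  simp [ContinuousLinearMap.add_apply, ContinuousLinearMap.smul_apply]

/-- For any least-squares fitted quadratic `p` on the seven-point patch, the recovered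
mixed second derivative at `z` is `(2u₀ − u₁ + u₂ − u₃ − u₄ + u₅ − u₆)/(2h²)`. -/
theorem recovered_xy_derivative (h : ℝ) (hh : 0 < h) (z : ℝ × ℝ) (u : Fin 7 → ℝ)
    (p : ℝ × ℝ → ℝ) (hp : IsP2 p)
    (hmin : ∀ q : ℝ × ℝ → ℝ, IsP2 q → LS h z u p ≤ LS h z u q) :
    pdy (pdx p) z = (2 * u 0 - u 1 + u 2 - u 3 - u 4 + u 5 - u 6) / (2 * h ^ 2) := by
  obtain ⟨a, b, c, d, e, f, hpe⟩ := hp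
  have hpfun : p = fun q : ℝ × ℝ =>
      a + b * q.1 + c * q.2 + d * q.1 ^ 2 + e * q.1 * q.2 + f * q.2 ^ 2 := funext hpe
  have hne : (h:ℝ) ≠ 0 := ne_of_gt hh
  have hne2 : h ^ 2 ≠ 0 := pow_ne_zero 2 hne
  -- Step 1: the mixed derivative is e
  have hmix : pdy (pdx p) z = e := by
    have hpdx : pdx p = fun q : ℝ × ℝ => b + 2 * d * q.1 + e * q.2 := by
      funext q
      rw [pdx, hpfun, quad_fderiv_x]
    rw [pdy, hpdx, lin_fderiv_y]
  -- the perturbation quadratic g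
  set g : ℝ × ℝ → ℝ := fun x =>
    2 - (3 / h ^ 2) * (x.1 - z.1) ^ 2 + (5 / h ^ 2) * (x.1 - z.1) * (x.2 - z.2)
      - (3 / h ^ 2) * (x.2 - z.2) ^ 2 with hg
  -- point coordinates
  have e0 : pts h z 0 = z := rfl
  have e1 : pts h z 1 = (z.1 + h, z.2) := by
    show z + (h, 0) = _ ; ext <;> simp
  have e2 : pts h z 2 = (z.1 + h, z.2 + h) := by
    show z + (h, h) = _ ; ext <;> simp
  have e3 : pts h z 3 = (z.1, z.2 + h) := by
    show z + (0, h) = _ ; ext <;> simp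
  have e4 : pts h z 4 = (z.1 - h, z.2) := by
    show z - (h, 0) = _ ; ext <;> simp
  have e5 : pts h z 5 = (z.1 - h, z.2 - h) := by
    show z - (h, h) = _ ; ext <;> simp
  have e6 : pts h z 6 = (z.1, z.2 - h) := by
    show z - (0, h) = _ ; ext <;> simp
  set S : ℝ := 2 * (p (pts h z 0) - u 0) - (p (pts h z 1) - u 1) + (p (pts h z 2) - u 2)
      - (p (pts h z 3) - u 3) - (p (pts h z 4) - u 4) + (p (pts h z 5) - u 5)
      - (p (pts h z 6) - u 6) with hS
  clear_value S
  have expand : ∀ t : ℝ, LS h z u (fun x => p x + t * g x)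
      = LS h z u p + 2 * t * S + t ^ 2 * 10 := by
    intro t
    have gv0 : g (pts h z 0) = 2 := by rw [e0]; simp [hg]
    have gv1 : g (pts h z 1) = -1 := by rw [e1]; simp only [hg]; field_simp; ring
    have gv2 : g (pts h z 2) = 1 := by rw [e2]; simp only [hg]; field_simp; ring
    have gv3 : g (pts h z 3) = -1 := by rw [e3]; simp only [hg]; field_simp; ring
    have gv4 : g (pts h z 4) = -1 := by rw [e4]; simp only [hg]; field_simp; ring
    have gv5 : g (pts h z 5) = 1 := by rw [e5]; simp only [hg]; field_simp; ring
    have gv6 : g (pts h z 6) = -1 := by rw [e6]; simp only [hg]; field_simp; ring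
    simp only [LS, Fin.sum_univ_seven, gv0, gv1, gv2, gv3, gv4, gv5, gv6, hS]
    ring
  -- the perturbed function is in P2
  have hP2g : ∀ t : ℝ, IsP2 (fun x => p x + t * g x) := by
    intro t
    refine ⟨a + t * (2 - 3 / h ^ 2 * z.1 ^ 2 + 5 / h ^ 2 * z.1 * z.2 - 3 / h ^ 2 * z.2 ^ 2),
      b + t * (6 / h ^ 2 * z.1 - 5 / h ^ 2 * z.2),
      c + t * (6 / h ^ 2 * z.2 - 5 / h ^ 2 * z.1),
      d + t * (-(3 / h ^ 2)), e + t * (5 / h ^ 2), f + t * (-(3 / h ^ 2)), fun q => ?_⟩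
    show p q + t * g q = _
    rw [hpe, hg]
    ring
  -- minimality gives S = 0
  have hS0 : S = 0 := by
    have h1 := hmin _ (hP2g (-S / 10))
    rw [expand] at h1
    have h2 : 2 * (-S / 10) * S + (-S / 10) ^ 2 * 10 = -(S ^ 2) / 10 := by ring
    have h3 : S ^ 2 = 0 := by linarith [sq_nonneg S]
    exact pow_eq_zero_iff (two_ne_zero) |>.mp h3
  -- express S via coefficients
  have hSval : S = 2 * e * h ^ 2
      - (2 * u 0 - u 1 + u 2 - u 3 - u 4 + u 5 - u 6) := by
    rw [hS, e0, e1, e2, e3, e4, e5, e6]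
    simp only [hpe]
    ring
  rw [hmix]
  rw [hSval] at hS0
  field_simp
  linarith
end
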